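/- arXiv:1605.01872 — 7 statements merged into one kernel-verified Lean document; each statement's English description precedes it below -/
import Mathlib

section
/- Let N be a finite-dimensional real normed space and let a, b be nonzero elements of N. Then the distance between the normalized vectors satisfies ‖a/‖a‖ − b/‖b‖‖ ≥ (‖a − b‖ − |‖a‖ − ‖b‖|)/‖b‖. -/
/-- The "bow-and-arrow" inequality of Füredi and Loeb. -/
theorem bow_and_arrow {N : Type*} [NormedAddCommGroup N] [NormedSpace ℝ N]
    [FiniteDimensional ℝ N] (a b : N) (ha : a ≠ 0) (hb : b ≠ 0) :
    (‖a - b‖ - |‖a‖ - ‖b‖|) / ‖b‖ ≤ ‖‖a‖⁻¹ • a - ‖b‖⁻¹ • b‖ := by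
  have hna : ‖a‖ ≠ 0 := norm_ne_zero_iff.mpr ha
  have hnb : (0:ℝ) < ‖b‖ := norm_pos_iff.mpr hb
  rw [div_le_iff₀ hnb, sub_le_iff_le_add]
  have key : ‖b‖ • (‖a‖⁻¹ • a - ‖b‖⁻¹ • b) = (‖b‖/‖a‖) • a - b := by
    rw [smul_sub, smul_smul, smul_smul, mul_inv_cancel₀ hnb.ne', one_smul, div_eq_mul_inv,
      mul_comm]
  have h1 : ‖(‖b‖/‖a‖) • a - b‖ = ‖(‖a‖⁻¹ • a - ‖b‖⁻¹ • b)‖ * ‖b‖ := by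
    rw [← key, norm_smul, Real.norm_eq_abs, abs_of_pos hnb, mul_comm]
  have h2 : ‖a - (‖b‖/‖a‖) • a‖ = |‖a‖ - ‖b‖| := by
    have : a - (‖b‖/‖a‖) • a = (1 - ‖b‖/‖a‖) • a := by
      rw [sub_smul, one_smul]
    rw [this, norm_smul, Real.norm_eq_abs]
    rw [show (1 - ‖b‖/‖a‖) = (‖a‖ - ‖b‖)/‖a‖ by field_simp]
    rw [abs_div, abs_of_nonneg (norm_nonneg a), div_mul_cancel₀ _ hna]
  calc ‖a - b‖ ≤ ‖a - (‖b‖/‖a‖) • a‖ + ‖(‖b‖/‖a‖) • a - b‖ := norm_sub_le_norm_sub_add_norm_sub _ _ _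
    _ = ‖(‖a‖⁻¹ • a - ‖b‖⁻¹ • b)‖ * ‖b‖ + |‖a‖ - ‖b‖| := by rw [h1, h2, add_comm]
end

section
/- Let N be a real normed space and define π : N → N by π(x) = x if ‖x‖ ≤ 2 and π(x) = (2/‖x‖)x if ‖x‖ ≥ 2. Let v₁, v₂ ∈ N and λ₁, λ₂ ∈ ℝ satisfy max{λ₁, λ₂} ≥ 1, ‖v₁ − v₂‖ ≥ max{λ₁, λ₂}, ‖v₁‖ ≤ λ₁ + 1, and ‖v₂‖ ≤ λ₂ + 1. Then ‖π(v₁) − π(v₂)‖ ≥ 1. -/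
private lemma sat_mixed {N : Type*} [NormedAddCommGroup N] [NormedSpace ℝ N]
    (v₁ v₂ : N) (hb : 2 < ‖v₂‖) (hD : ‖v₂‖ - 1 ≤ ‖v₁ - v₂‖) :
    1 ≤ ‖v₁ - (2 / ‖v₂‖) • v₂‖ := by
  have hbpos : (0:ℝ) < ‖v₂‖ := by linarith
  have hkey : ‖v₂ - (2 / ‖v₂‖) • v₂‖ = ‖v₂‖ - 2 := by
    have : v₂ - (2 / ‖v₂‖) • v₂ = (1 - 2 / ‖v₂‖) • v₂ := by
      rw [sub_smul, one_smul]
    rw [this, norm_smul, Real.norm_eq_abs, abs_of_nonneg (by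
      rw [sub_nonneg, div_le_one hbpos]; linarith)]
    field_simp
  have htri : ‖v₁ - v₂‖ ≤ ‖v₁ - (2 / ‖v₂‖) • v₂‖ + ‖v₂ - (2 / ‖v₂‖) • v₂‖ := by
    calc ‖v₁ - v₂‖ = ‖(v₁ - (2 / ‖v₂‖) • v₂) - (v₂ - (2 / ‖v₂‖) • v₂)‖ := by abel_nf
    _ ≤ _ := norm_sub_le _ _
  linarith

private lemma sat_both {N : Type*} [NormedAddCommGroup N] [NormedSpace ℝ N]
    (v₁ v₂ : N) (ha : 2 < ‖v₁‖) (hb : 2 < ‖v₂‖) (hab : ‖v₁‖ ≤ ‖v₂‖)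
    (hD : ‖v₂‖ - 1 ≤ ‖v₁ - v₂‖) :
    1 ≤ ‖(2 / ‖v₁‖) • v₁ - (2 / ‖v₂‖) • v₂‖ := by
  have hapos : (0:ℝ) < ‖v₁‖ := by linarith
  have hbpos : (0:ℝ) < ‖v₂‖ := by linarith
  have hfac : (2 / ‖v₁‖) • v₁ - (2 / ‖v₂‖) • v₂
      = (2 / ‖v₁‖) • (v₁ - (‖v₁‖ / ‖v₂‖) • v₂) := by
    rw [smul_sub, smul_smul]
    congr 2
    field_simp
  have hkey : ‖v₂ - (‖v₁‖ / ‖v₂‖) • v₂‖ = ‖v₂‖ - ‖v₁‖ := by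
    have : v₂ - (‖v₁‖ / ‖v₂‖) • v₂ = (1 - ‖v₁‖ / ‖v₂‖) • v₂ := by
      rw [sub_smul, one_smul]
    rw [this, norm_smul, Real.norm_eq_abs, abs_of_nonneg (by
      rw [sub_nonneg, div_le_one hbpos]; linarith)]
    field_simp
  have htri : ‖v₁ - v₂‖ ≤ ‖v₁ - (‖v₁‖ / ‖v₂‖) • v₂‖ + ‖v₂ - (‖v₁‖ / ‖v₂‖) • v₂‖ := by
    calc ‖v₁ - v₂‖ = ‖(v₁ - (‖v₁‖ / ‖v₂‖) • v₂) - (v₂ - (‖v₁‖ / ‖v₂‖) • v₂)‖ := by abel_nf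
    _ ≤ _ := norm_sub_le _ _
  have hlow : ‖v₁‖ - 1 ≤ ‖v₁ - (‖v₁‖ / ‖v₂‖) • v₂‖ := by linarith
  rw [hfac, norm_smul, Real.norm_eq_abs, abs_of_pos (by positivity)]
  rw [div_mul_eq_mul_div, le_div_iff₀ hapos]
  nlinarith

/-- The satellite lemma: the radial retraction onto the ball of radius 2
keeps the two points at distance at least 1. -/
theorem satellite_lemma {N : Type*} [NormedAddCommGroup N] [NormedSpace ℝ N]
    (π : N → N)
    (hπ : ∀ x : N, π x = if ‖x‖ ≤ 2 then x else (2 / ‖x‖) • x)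
    (v₁ v₂ : N) (l₁ l₂ : ℝ)
    (hmax : 1 ≤ max l₁ l₂)
    (hdist : max l₁ l₂ ≤ ‖v₁ - v₂‖)
    (hv₁ : ‖v₁‖ ≤ l₁ + 1)
    (hv₂ : ‖v₂‖ ≤ l₂ + 1) :
    1 ≤ ‖π v₁ - π v₂‖ := by
  have hD1 : ‖v₁‖ - 1 ≤ ‖v₁ - v₂‖ := le_trans (by have := le_max_left l₁ l₂; linarith) hdist
  have hD2 : ‖v₂‖ - 1 ≤ ‖v₁ - v₂‖ := le_trans (by have := le_max_right l₁ l₂; linarith) hdist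
  rw [hπ v₁, hπ v₂]
  by_cases c1 : ‖v₁‖ ≤ 2 <;> by_cases c2 : ‖v₂‖ ≤ 2 <;> simp only [c1, c2, if_true, if_false, if_pos, if_neg, not_false_iff]
  · linarith
  · exact sat_mixed v₁ v₂ (lt_of_not_ge c2) hD2
  · rw [norm_sub_rev]
    exact sat_mixed v₂ v₁ (lt_of_not_ge c1) (by rw [norm_sub_rev]; exact hD1)
  · rcases le_total ‖v₁‖ ‖v₂‖ with h | h
    · exact sat_both v₁ v₂ (lt_of_not_ge c1) (lt_of_not_ge c2) h hD2
    · rw [norm_sub_rev]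
      exact sat_both v₂ v₁ (lt_of_not_ge c2) (lt_of_not_ge c1) h (by rw [norm_sub_rev]; exact hD1)
end

section
/- Let N be a real normed space and define π : N → N by π(x) = x if ‖x‖ ≤ 2 and π(x) = (2/‖x‖)x if ‖x‖ ≥ 2. If v₁, v₂ ∈ N both satisfy ‖vᵢ‖ ≥ 2 and ‖v₂‖ ≤ ‖v₁‖, and ‖v₁ − v₂‖ ≥ λ₁ ≥ 1 with ‖v₁‖ ≤ λ₁ + 1 and ‖v₂‖ ≤ 3, then ‖π(v₁) − π(v₂)‖ = ‖2·v₁/‖v₁‖ − 2·v₂/‖v₂‖‖ ≥ 1. -/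
/-- The case of the satellite lemma in which both points lie outside the
ball of radius 2. -/
theorem satellite_lemma_both_outside {N : Type*} [NormedAddCommGroup N] [NormedSpace ℝ N]
    (π : N → N)
    (hπ : ∀ x : N, π x = if ‖x‖ ≤ 2 then x else (2 / ‖x‖) • x)
    (v₁ v₂ : N) (l₁ : ℝ)
    (h₁ : 2 ≤ ‖v₁‖) (h₂ : 2 ≤ ‖v₂‖) (h₂₁ : ‖v₂‖ ≤ ‖v₁‖)
    (hl : 1 ≤ l₁) (hdist : l₁ ≤ ‖v₁ - v₂‖)
    (hv₁ : ‖v₁‖ ≤ l₁ + 1) (hv₂ : ‖v₂‖ ≤ 3) :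
    ‖π v₁ - π v₂‖ = ‖(2 : ℝ) • (‖v₁‖⁻¹ • v₁) - (2 : ℝ) • (‖v₂‖⁻¹ • v₂)‖ ∧
      1 ≤ ‖π v₁ - π v₂‖ := by
  have ha : (0:ℝ) < ‖v₁‖ := by linarith
  have hb : (0:ℝ) < ‖v₂‖ := by linarith
  have eπ : ∀ v : N, 2 ≤ ‖v‖ → π v = (2 / ‖v‖) • v := by
    intro v hv
    rw [hπ]
    rcases le_or_gt ‖v‖ 2 with h | h
    · have h2 : ‖v‖ = 2 := le_antisymm h hv
      rw [if_pos h, h2]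
      norm_num
    · rw [if_neg (not_le.2 h)]
  have e₁ := eπ v₁ h₁
  have e₂ := eπ v₂ h₂
  constructor
  · rw [e₁, e₂, smul_smul, smul_smul]
    rw [div_eq_mul_inv, div_eq_mul_inv]
  · rw [e₁, e₂]
    have key : (2/‖v₁‖) • v₁ - (2/‖v₂‖) • v₂ =
        (2/‖v₂‖) • (v₁ - v₂) + (2/‖v₁‖ - 2/‖v₂‖) • v₁ := by
      rw [smul_sub, sub_smul]; abel
    rw [key]
    have hA : ‖(2/‖v₂‖) • (v₁ - v₂)‖ = (2/‖v₂‖) * ‖v₁ - v₂‖ := by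
      rw [norm_smul, Real.norm_eq_abs, abs_of_pos (by positivity)]
    have hB : ‖(2/‖v₁‖ - 2/‖v₂‖) • v₁‖ = (2/‖v₂‖ - 2/‖v₁‖) * ‖v₁‖ := by
      rw [norm_smul, Real.norm_eq_abs, abs_of_nonpos]
      · ring
      · have : 2/‖v₁‖ ≤ 2/‖v₂‖ := by
          apply div_le_div_of_nonneg_left (by norm_num) hb h₂₁
        linarith
    have tri : ‖(2/‖v₂‖) • (v₁ - v₂)‖ - ‖(2/‖v₁‖ - 2/‖v₂‖) • v₁‖ ≤
        ‖(2/‖v₂‖) • (v₁ - v₂) + (2/‖v₁‖ - 2/‖v₂‖) • v₁‖ := by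
      have := norm_add_le ((2/‖v₂‖) • (v₁ - v₂) + (2/‖v₁‖ - 2/‖v₂‖) • v₁)
        (-((2/‖v₁‖ - 2/‖v₂‖) • v₁))
      simp only [norm_neg] at this
      simpa using this
    rw [hA, hB] at tri
    refine le_trans ?_ tri
    have hd : ‖v₁‖ - 1 ≤ ‖v₁ - v₂‖ := by linarith
    have hcancel : (2/‖v₁‖) * ‖v₁‖ = 2 := by field_simp
    have h1 : (2/‖v₂‖ - 2/‖v₁‖) * ‖v₁‖ = 2 * ‖v₁‖ / ‖v₂‖ - 2 := by
      field_simp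
    rw [h1]
    have key2 : 2/‖v₂‖ * ‖v₁-v₂‖ - (2*‖v₁‖/‖v₂‖ - 2) =
        (2*‖v₁-v₂‖ - 2*‖v₁‖ + 2*‖v₂‖)/‖v₂‖ := by
      field_simp; ring
    rw [key2, le_div_iff₀ hb]
    linarith
end

section
/- Let c₁, …, c_m be distinct points in a real normed space N, let k ∈ ℕ with k ≥ 1 and m ≥ k + 1, and for each i let r_i denote the smallest r ≥ 0 such that the set {j : j ≠ i, ‖c_i − c_j‖ ≤ r} has at least k elements. Let H be the graph on {1, …, m} in which i and j are adjacent whenever ‖c_i − c_j‖ < max{r_i, r_j}. Then the chromatic number of H is at most k. -/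
/-- Strict order on `Fin m` by radius, ties broken by index. -/
abbrev ordR {m : ℕ} (r : Fin m → ℝ) (u v : Fin m) : Prop :=
  r u < r v ∨ (r u = r v ∧ u < v)

lemma ordR_trans {m : ℕ} {r : Fin m → ℝ} {a b c : Fin m}
    (h1 : ordR r a b) (h2 : ordR r b c) : ordR r a c := by
  rcases h1 with h1 | ⟨h1, h1'⟩ <;> rcases h2 with h2 | ⟨h2, h2'⟩
  · exact Or.inl (h1.trans h2)
  · exact Or.inl (lt_of_lt_of_le h1 h2.le)
  · exact Or.inl (lt_of_le_of_lt h1.le h2)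
  · exact Or.inr ⟨h1.trans h2, h1'.trans h2'⟩

lemma ordR_irrefl {m : ℕ} {r : Fin m → ℝ} {a : Fin m} (h : ordR r a a) : False := by
  rcases h with h | ⟨_, h⟩
  · exact lt_irrefl _ h
  · exact lt_irrefl _ h

lemma ordR_total {m : ℕ} {r : Fin m → ℝ} {a b : Fin m} (h : a ≠ b) :
    ordR r a b ∨ ordR r b a := by
  rcases lt_trichotomy (r a) (r b) with h1 | h1 | h1
  · exact Or.inl (Or.inl h1)
  · rcases h.lt_or_gt with h2 | h2
    · exact Or.inl (Or.inr ⟨h1, h2⟩)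
    · exact Or.inr (Or.inr ⟨h1.symm, h2⟩)
  · exact Or.inr (Or.inl h1)

lemma ordR_le {m : ℕ} {r : Fin m → ℝ} {a b : Fin m} (h : ordR r a b) : r a ≤ r b := by
  rcases h with h | ⟨h, _⟩
  · exact h.le
  · exact h.le

noncomputable def rankR (m : ℕ) (r : Fin m → ℝ) (v : Fin m) : ℕ :=
  (Finset.univ.filter (fun u => ordR r u v)).card

lemma rankR_lt {m : ℕ} {r : Fin m → ℝ} {u v : Fin m} (h : ordR r u v) :
    rankR m r u < rankR m r v := by
  apply Finset.card_lt_card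
  constructor
  · intro w hw
    simp only [Finset.mem_filter, Finset.mem_univ, true_and] at hw ⊢
    exact ordR_trans hw h
  · intro hsub
    have := hsub (by simp [h] : u ∈ Finset.univ.filter (fun w => ordR r w v))
    simp only [Finset.mem_filter, Finset.mem_univ, true_and] at this
    exact ordR_irrefl this

open Classical in
/-- The neighbors of `v` that come strictly before it in the order. -/
noncomputable def prevFinset (m : ℕ) (r : Fin m → ℝ) (H : SimpleGraph (Fin m)) (v : Fin m) :
    Finset (Fin m) :=
  Finset.univ.filter (fun u => H.Adj v u ∧ ordR r u v)

lemma mem_prevFinset {m : ℕ} {r : Fin m → ℝ} {H : SimpleGraph (Fin m)} {u v : Fin m} :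
    u ∈ prevFinset m r H v ↔ H.Adj v u ∧ ordR r u v := by
  classical
  simp [prevFinset]

/-- Greedy coloring along the order: smallest color not used by earlier neighbors. -/
noncomputable def greedyColor (m : ℕ) (r : Fin m → ℝ) (H : SimpleGraph (Fin m)) (v : Fin m) :
    ℕ :=
  sInf {n : ℕ | n ∉ (prevFinset m r H v).attach.image (fun u => greedyColor m r H u.1)}
termination_by rankR m r v
decreasing_by
  exact rankR_lt (mem_prevFinset.mp u.2).2

lemma greedyColor_notMem {m : ℕ} (r : Fin m → ℝ) (H : SimpleGraph (Fin m)) (v : Fin m) :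
    greedyColor m r H v ∉
      (prevFinset m r H v).attach.image (fun u => greedyColor m r H u.1) := by
  have hne : {n : ℕ | n ∉ (prevFinset m r H v).attach.image
      (fun u => greedyColor m r H u.1)}.Nonempty := by
    obtain ⟨n, hn⟩ := Infinite.exists_notMem_finset
      ((prevFinset m r H v).attach.image (fun u => greedyColor m r H u.1))
    exact ⟨n, hn⟩
  have := Nat.sInf_mem hne
  rw [← greedyColor] at this
  exact this

/-- The chromatic number of the auxiliary graph `H` is at most `k`. -/
theorem auxiliary_graph_chromaticNumber {N : Type*} [NormedAddCommGroup N] [NormedSpace ℝ N]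
    [FiniteDimensional ℝ N]
    (m k : ℕ) (hk : 1 ≤ k) (hm : k + 1 ≤ m)
    (c : Fin m → N) (hc : Function.Injective c)
    (r : Fin m → ℝ)
    (hr : ∀ i : Fin m,
      IsLeast {ρ : ℝ | 0 ≤ ρ ∧ k ≤ {j : Fin m | j ≠ i ∧ ‖c i - c j‖ ≤ ρ}.ncard} (r i))
    (H : SimpleGraph (Fin m))
    (hH : ∀ i j : Fin m, H.Adj i j ↔ i ≠ j ∧ ‖c i - c j‖ < max (r i) (r j)) :
    H.chromaticNumber ≤ k := by
  classical
  -- Step A: each vertex has fewer than k earlier neighbors.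
  have hcard : ∀ v : Fin m, (prevFinset m r H v).card < k := by
    intro v
    have hFlt : (Finset.univ.filter
        (fun u : Fin m => u ≠ v ∧ ‖c v - c u‖ < r v)).card < k := by
      by_contra hle
      push_neg at hle
      set F := Finset.univ.filter (fun u : Fin m => u ≠ v ∧ ‖c v - c u‖ < r v) with hF
      have hFne : F.Nonempty := Finset.card_pos.mp (lt_of_lt_of_le hk hle)
      have hDne : (F.image (fun u => ‖c v - c u‖)).Nonempty := hFne.image _
      set ρ := (F.image (fun u => ‖c v - c u‖)).max' hDne with hρ
      have hρmem := (F.image (fun u => ‖c v - c u‖)).max'_mem hDne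
      have hρ0 : 0 ≤ ρ := by
        rw [Finset.mem_image] at hρmem
        obtain ⟨u, _, hu⟩ := hρmem
        rw [hρ, ← hu]; exact norm_nonneg _
      have hρlt : ρ < r v := by
        rw [hρ, Finset.max'_lt_iff]
        intro x hx
        rw [Finset.mem_image] at hx
        obtain ⟨u, hu, hux⟩ := hx
        rw [Finset.mem_filter] at hu
        rw [← hux]; exact hu.2.2
      have hsub : (F : Set (Fin m)) ⊆ {j : Fin m | j ≠ v ∧ ‖c v - c j‖ ≤ ρ} := by
        intro u hu
        have huF : u ∈ F := hu
        have hu' := Finset.mem_filter.mp huF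
        refine ⟨hu'.2.1, ?_⟩
        rw [hρ]
        exact Finset.le_max' (F.image (fun u => ‖c v - c u‖)) ‖c v - c u‖
          (Finset.mem_image.mpr ⟨u, huF, rfl⟩)
      have hk2 : k ≤ {j : Fin m | j ≠ v ∧ ‖c v - c j‖ ≤ ρ}.ncard := by
        calc k ≤ F.card := hle
          _ = (F : Set (Fin m)).ncard := (Set.ncard_coe_finset F).symm
          _ ≤ _ := Set.ncard_le_ncard hsub (Set.toFinite _)
      have := (hr v).2 ⟨hρ0, hk2⟩
      exact absurd hρlt (not_lt.mpr this)
    refine lt_of_le_of_lt (Finset.card_le_card ?_) hFlt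
    intro u hu
    rw [mem_prevFinset] at hu
    rw [Finset.mem_filter]
    refine ⟨Finset.mem_univ u, ?_, ?_⟩
    · exact ((hH v u).mp hu.1).1.symm
    · have hlt := ((hH v u).mp hu.1).2
      have : max (r v) (r u) = r v := max_eq_left (ordR_le hu.2)
      rwa [this] at hlt
  -- Step B: greedy colors are < k.
  have hbound : ∀ v : Fin m, greedyColor m r H v < k := by
    intro v
    set T := (prevFinset m r H v).attach.image (fun u => greedyColor m r H u.1) with hT
    have hTcard : T.card < k := by
      calc T.card ≤ (prevFinset m r H v).attach.card := Finset.card_image_le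
        _ = (prevFinset m r H v).card := Finset.card_attach
        _ < k := hcard v
    have hns : ¬ (Finset.range k ⊆ T) := fun h => absurd (Finset.card_le_card h)
      (by rw [Finset.card_range]; omega)
    obtain ⟨n, hnr, hnT⟩ := Finset.not_subset.mp hns
    rw [Finset.mem_range] at hnr
    have : greedyColor m r H v ≤ n := by
      rw [greedyColor]
      exact Nat.sInf_le hnT
    exact lt_of_le_of_lt this hnr
  -- Step C: validity.
  have hvalid : ∀ a b : Fin m, H.Adj a b → greedyColor m r H a ≠ greedyColor m r H b := by
    have key : ∀ a b : Fin m, H.Adj a b → ordR r b a →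
        greedyColor m r H a ≠ greedyColor m r H b := by
      intro a b hab hba heq
      apply greedyColor_notMem r H a
      rw [heq]
      exact Finset.mem_image.mpr ⟨⟨b, mem_prevFinset.mpr ⟨hab, hba⟩⟩, Finset.mem_attach _ _, rfl⟩
    intro a b hab
    rcases ordR_total (H.ne_of_adj hab) with h | h
    · exact (key b a hab.symm h).symm
    · exact key a b hab h
  -- Assemble the coloring.
  have hcol : H.Colorable k := by
    refine ⟨SimpleGraph.Coloring.mk (fun v => ⟨greedyColor m r H v, hbound v⟩) ?_⟩
    intro a b hab
    simp only [ne_eq, Fin.mk.injEq]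
    exact hvalid a b hab
  exact hcol.chromaticNumber_le
end

section
/- Let N be a real normed space, let θ ∈ ℕ be such that every finite set S of points in the closed ball B(o,2) with o ∈ S and ‖x − y‖ ≥ 1 for all distinct x, y ∈ S satisfies |S| ≤ θ. Let P be a finite set of points of N, all lying outside the open unit ball (‖p‖ ≥ 1 for all p ∈ P), and suppose each p ∈ P is assigned a radius λ_p ≥ 1 such that ‖p‖ ≤ λ_p + 1 (i.e., B(p, λ_p) meets B(o,1)) and such that for all distinct p, q ∈ P one has ‖p − q‖ ≥ max{λ_p, λ_q} (i.e., no center lies in the open ball of another). Then |P| ≤ θ − 1. -/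
noncomputable def satProj {N : Type*} [NormedAddCommGroup N] [NormedSpace ℝ N] (x : N) : N :=
  if ‖x‖ ≤ 2 then x else (2 / ‖x‖) • x

lemma satProj_norm {N : Type*} [NormedAddCommGroup N] [NormedSpace ℝ N] (x : N) :
    ‖satProj x‖ = min ‖x‖ 2 := by
  unfold satProj
  split
  · rw [min_eq_left ‹_›]
  · push_neg at *
    have hx : (0:ℝ) < ‖x‖ := by linarith
    rw [norm_smul, Real.norm_eq_abs, abs_of_pos (by positivity), min_eq_right (le_of_lt ‹_›)]
    field_simp

lemma satProj_key {N : Type*} [NormedAddCommGroup N] [NormedSpace ℝ N] {p q : N}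
    (hab : ‖p‖ ≤ ‖q‖) (h1 : 1 ≤ ‖p - q‖) (h2 : ‖q‖ - 1 ≤ ‖p - q‖) :
    1 ≤ ‖satProj p - satProj q‖ := by
  unfold satProj
  by_cases hq : ‖q‖ ≤ 2
  · rw [if_pos (hab.trans hq), if_pos hq]; exact h1
  push_neg at hq
  rw [if_neg (not_le.2 hq)]
  have hb : (0:ℝ) < ‖q‖ := by linarith
  by_cases hp : ‖p‖ ≤ 2
  · rw [if_pos hp]
    have hqr : ‖q - (2 / ‖q‖) • q‖ = ‖q‖ - 2 := by
      have h : q - (2 / ‖q‖) • q = (1 - 2 / ‖q‖) • q := by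
        rw [sub_smul, one_smul]
      rw [h, norm_smul, Real.norm_eq_abs, abs_of_nonneg (by rw [sub_nonneg, div_le_one hb]; linarith)]
      field_simp
    have htri : ‖p - q‖ ≤ ‖p - (2 / ‖q‖) • q‖ + ‖q - (2 / ‖q‖) • q‖ := by
      have := norm_add_le (p - (2 / ‖q‖) • q) ((2 / ‖q‖) • q - q)
      rw [norm_sub_rev (q)] at *
      simpa using this
    rw [hqr] at htri
    linarith
  · push_neg at hp
    rw [if_neg (not_le.2 hp)]
    have ha : (0:ℝ) < ‖p‖ := by linarith
    have heq : (2 / ‖p‖) • p - (2 / ‖q‖) • q = (2 / ‖p‖) • (p - (‖p‖ / ‖q‖) • q) := by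
      rw [smul_sub, smul_smul]
      congr 2
      field_simp
    have hqr : ‖q - (‖p‖ / ‖q‖) • q‖ = ‖q‖ - ‖p‖ := by
      have h : q - (‖p‖ / ‖q‖) • q = (1 - ‖p‖ / ‖q‖) • q := by
        rw [sub_smul, one_smul]
      rw [h, norm_smul, Real.norm_eq_abs, abs_of_nonneg (by rw [sub_nonneg, div_le_one hb]; exact hab)]
      field_simp
    have htri : ‖p - q‖ ≤ ‖p - (‖p‖ / ‖q‖) • q‖ + ‖q - (‖p‖ / ‖q‖) • q‖ := by
      have := norm_add_le (p - (‖p‖ / ‖q‖) • q) ((‖p‖ / ‖q‖) • q - q)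
      rw [norm_sub_rev (q)] at *
      simpa using this
    rw [hqr] at htri
    have hlow : ‖p‖ - 1 ≤ ‖p - (‖p‖ / ‖q‖) • q‖ := by linarith
    rw [heq, norm_smul, Real.norm_eq_abs, abs_of_pos (by positivity)]
    rw [div_mul_eq_mul_div, le_div_iff₀ ha]
    nlinarith [norm_nonneg (p - (‖p‖ / ‖q‖) • q)]

/-- Packing bound for the "satellite" configuration: if every finite subset of the
closed ball of radius 2 containing the origin with pairwise distances at least 1
has at most `θ` points, then any finite family of points outside the open unit
ball whose balls meet the unit ball and whose centers avoid each other's open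
balls has at most `θ - 1` points. -/
theorem satellite_packing_bound {N : Type*} [NormedAddCommGroup N] [NormedSpace ℝ N]
    (θ : ℕ)
    (hθ : ∀ S : Finset N, (∀ x ∈ S, ‖x‖ ≤ 2) → (0 : N) ∈ S →
      (∀ x ∈ S, ∀ y ∈ S, x ≠ y → 1 ≤ ‖x - y‖) → S.card ≤ θ)
    (P : Finset N) (lam : N → ℝ)
    (hout : ∀ p ∈ P, 1 ≤ ‖p‖)
    (hlam : ∀ p ∈ P, 1 ≤ lam p)
    (hmeet : ∀ p ∈ P, ‖p‖ ≤ lam p + 1)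
    (hsep : ∀ p ∈ P, ∀ q ∈ P, p ≠ q → max (lam p) (lam q) ≤ ‖p - q‖) :
    P.card ≤ θ - 1 := by
  classical
  -- key distance bound for distinct points of P
  have key : ∀ p ∈ P, ∀ q ∈ P, p ≠ q → 1 ≤ ‖satProj p - satProj q‖ := by
    intro p hp q hq hne
    have hs := hsep p hp q hq hne
    have h1 : 1 ≤ ‖p - q‖ := le_trans (le_trans (hlam p hp) (le_max_left _ _)) hs
    rcases le_total ‖p‖ ‖q‖ with h | h
    · exact satProj_key h h1 (by have := hmeet q hq; have := le_trans (le_max_right _ _) hs; linarith)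
    · rw [norm_sub_rev]
      refine satProj_key h (by rwa [norm_sub_rev]) ?_
      rw [norm_sub_rev]
      have := hmeet p hp; have := le_trans (le_max_left _ _) hs; linarith
  have hn1 : ∀ p ∈ P, 1 ≤ ‖satProj p‖ := by
    intro p hp
    rw [satProj_norm]
    exact le_min (hout p hp) one_le_two
  have hinj : Set.InjOn satProj (P : Set N) := by
    intro p hp q hq h
    by_contra hne
    have := key p hp q hq hne
    rw [h, sub_self, norm_zero] at this
    linarith
  set S : Finset N := insert 0 (P.image satProj) with hS
  have h0 : (0:N) ∉ P.image satProj := by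
    simp only [Finset.mem_image, not_exists]
    rintro p ⟨hp, h⟩
    have := hn1 p hp
    rw [h, norm_zero] at this
    linarith
  have hcard : S.card = P.card + 1 := by
    rw [hS, Finset.card_insert_of_notMem h0, Finset.card_image_of_injOn hinj]
  have hle : S.card ≤ θ := by
    refine hθ S ?_ (Finset.mem_insert_self _ _) ?_
    · intro x hx
      rcases Finset.mem_insert.1 hx with rfl | hx
      · simp
      · obtain ⟨p, hp, rfl⟩ := Finset.mem_image.1 hx
        rw [satProj_norm]; exact min_le_right _ _
    · intro x hx y hy hne
      rcases Finset.mem_insert.1 hx with rfl | hx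
      · rcases Finset.mem_insert.1 hy with rfl | hy
        · exact absurd rfl hne
        · obtain ⟨p, hp, rfl⟩ := Finset.mem_image.1 hy
          rw [zero_sub, norm_neg]; exact hn1 p hp
      · obtain ⟨p, hp, rfl⟩ := Finset.mem_image.1 hx
        rcases Finset.mem_insert.1 hy with rfl | hy
        · rw [sub_zero]; exact hn1 p hp
        · obtain ⟨q, hq, rfl⟩ := Finset.mem_image.1 hy
          exact key p hp q hq (fun h => hne (h ▸ rfl))
  omega
end

section
/- Let N be a d-dimensional real normed space, let k ∈ ℕ with k ≥ 1, and let θ ∈ ℕ be such that every finite set S ⊆ B(o,2) with o ∈ S and pairwise distances at least 1 satisfies |S| ≤ θ. Let c₁, …, c_m be distinct points of N with m ≥ 2 (and m ≥ k + 1 so that the radii are defined), and for each i let r_i be the smallest r ≥ 0 such that {j : j ≠ i, ‖c_i − c_j‖ ≤ r} has at least k elements. Let G be the graph on {1, …, m} joining i and j whenever the closed balls B(c_i, r_i) and B(c_j, r_j) intersect. Then there exist at least two distinct vertices of G whose degree is less than θ·k. -/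
open Finset

section Aux

variable {N : Type*} [NormedAddCommGroup N] [NormedSpace ℝ N]

/-- Radial projection into the ball of radius `2R`, rescaled so that the target ball
has radius 2. -/
noncomputable def sproj (R : ℝ) (v : N) : N :=
  if ‖v‖ ≤ 2 * R then R⁻¹ • v else (2 / ‖v‖) • v

lemma sproj_norm_le {R : ℝ} (hR : 0 < R) (v : N) : ‖sproj R v‖ ≤ 2 := by
  unfold sproj
  split_ifs with h
  · rw [norm_smul, norm_inv, Real.norm_eq_abs, abs_of_pos hR]
    have h2 : R⁻¹ * ‖v‖ ≤ R⁻¹ * (2 * R) :=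
      mul_le_mul_of_nonneg_left h (by positivity)
    have h3 : R⁻¹ * (2 * R) = 2 := by field_simp
    linarith
  · push_neg at h
    have hv : 0 < ‖v‖ := lt_trans (by linarith) h
    rw [norm_smul, Real.norm_eq_abs, abs_of_pos (by positivity : (0:ℝ) < 2 / ‖v‖)]
    rw [div_mul_cancel₀]
    · exact ne_of_gt hv

lemma sproj_norm_ge {R : ℝ} (hR : 0 < R) {v : N} (hv : R ≤ ‖v‖) :
    1 ≤ ‖sproj R v‖ := by
  unfold sproj
  split_ifs with h
  · rw [norm_smul, norm_inv, Real.norm_eq_abs, abs_of_pos hR]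
    have h2 : R⁻¹ * R ≤ R⁻¹ * ‖v‖ := mul_le_mul_of_nonneg_left hv (by positivity)
    rw [inv_mul_cancel₀ (ne_of_gt hR)] at h2
    linarith
  · push_neg at h
    have hv0 : 0 < ‖v‖ := lt_trans (by linarith) h
    rw [norm_smul, Real.norm_eq_abs, abs_of_pos (by positivity : (0:ℝ) < 2 / ‖v‖)]
    rw [div_mul_cancel₀]
    · linarith
    · exact ne_of_gt hv0

lemma sproj_sep_aux {R : ℝ} (hR : 0 < R) {x y : N} (hle : ‖y‖ ≤ ‖x‖)
    (hxy : R ≤ ‖x - y‖) (hx : ‖x‖ - R ≤ ‖x - y‖) :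
    1 ≤ ‖sproj R x - sproj R y‖ := by
  unfold sproj
  split_ifs with h1 h2 h2
  · -- both small
    rw [← smul_sub, norm_smul, norm_inv, Real.norm_eq_abs, abs_of_pos hR]
    have h3 : R⁻¹ * R ≤ R⁻¹ * ‖x - y‖ := mul_le_mul_of_nonneg_left hxy (by positivity)
    rw [inv_mul_cancel₀ (ne_of_gt hR)] at h3
    linarith
  · exact absurd (le_trans hle h1) h2
  · -- x big, y small
    push_neg at h1
    have hx0 : 0 < ‖x‖ := lt_trans (by linarith) h1
    have key : (2 / ‖x‖) • x - R⁻¹ • y = R⁻¹ • ((2 * R / ‖x‖) • x - y) := by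
      rw [smul_sub, smul_smul]
      congr 2
      field_simp
    rw [key, norm_smul, norm_inv, Real.norm_eq_abs, abs_of_pos hR]
    have hid : x - (2 * R / ‖x‖) • x = (1 - 2 * R / ‖x‖) • x := by
      rw [sub_smul, one_smul]
    have hcoef : 0 ≤ 1 - 2 * R / ‖x‖ := by
      rw [sub_nonneg, div_le_one hx0]; linarith
    have hna : ‖x - (2 * R / ‖x‖) • x‖ = ‖x‖ - 2 * R := by
      rw [hid, norm_smul, Real.norm_eq_abs, abs_of_nonneg hcoef]
      field_simp
    have tri : ‖x - y‖ ≤ ‖x - (2 * R / ‖x‖) • x‖ + ‖(2 * R / ‖x‖) • x - y‖ := by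
      calc ‖x - y‖ = ‖(x - (2 * R / ‖x‖) • x) + ((2 * R / ‖x‖) • x - y)‖ := by
            rw [sub_add_sub_cancel]
        _ ≤ _ := norm_add_le _ _
    have h5 : R ≤ ‖(2 * R / ‖x‖) • x - y‖ := by rw [hna] at tri; linarith
    have h6 : R⁻¹ * R ≤ R⁻¹ * ‖(2 * R / ‖x‖) • x - y‖ :=
      mul_le_mul_of_nonneg_left h5 (by positivity)
    rw [inv_mul_cancel₀ (ne_of_gt hR)] at h6
    linarith
  · -- both big
    push_neg at h1 h2
    have hy0 : 0 < ‖y‖ := lt_trans (by linarith) h2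
    have hx0 : 0 < ‖x‖ := lt_of_lt_of_le hy0 hle
    have key : (2 / ‖x‖) • x - (2 / ‖y‖) • y
        = (2 / (‖x‖ * ‖y‖)) • (‖y‖ • x - ‖x‖ • y) := by
      rw [smul_sub, smul_smul, smul_smul]
      congr 2
      · field_simp
      · field_simp
    have decomp : ‖y‖ • x - ‖x‖ • y = ‖x‖ • (x - y) - (‖x‖ - ‖y‖) • x := by
      rw [smul_sub, sub_smul]; abel
    have hlow : ‖x‖ * (‖x - y‖ - ‖x‖ + ‖y‖) ≤ ‖‖y‖ • x - ‖x‖ • y‖ := by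
      rw [decomp]
      have t1 : ‖‖x‖ • (x - y)‖ - ‖(‖x‖ - ‖y‖) • x‖ ≤ ‖‖x‖ • (x - y) - (‖x‖ - ‖y‖) • x‖ :=
        norm_sub_norm_le _ _
      rw [norm_smul, norm_smul, Real.norm_eq_abs, Real.norm_eq_abs,
        abs_of_nonneg (norm_nonneg x), abs_of_nonneg (by linarith : (0:ℝ) ≤ ‖x‖ - ‖y‖)] at t1
      nlinarith
    rw [key, norm_smul, Real.norm_eq_abs,
      abs_of_pos (by positivity : (0:ℝ) < 2 / (‖x‖ * ‖y‖))]
    have h7 : ‖x‖ * (‖y‖ - R) ≤ ‖x‖ * (‖x - y‖ - ‖x‖ + ‖y‖) := by nlinarith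
    have h8 : (2 / (‖x‖ * ‖y‖)) * (‖x‖ * (‖y‖ - R)) ≤ (2 / (‖x‖ * ‖y‖)) * ‖‖y‖ • x - ‖x‖ • y‖ := by
      apply mul_le_mul_of_nonneg_left _ (by positivity)
      linarith
    have h9 : (2 / (‖x‖ * ‖y‖)) * (‖x‖ * (‖y‖ - R)) = 2 * (‖y‖ - R) / ‖y‖ := by
      field_simp
    have h10 : 1 ≤ 2 * (‖y‖ - R) / ‖y‖ := by
      rw [le_div_iff₀ hy0]; linarith
    linarith

lemma sproj_sep {R : ℝ} (hR : 0 < R) {x y : N}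
    (hxy : R ≤ ‖x - y‖) (hx : ‖x‖ - R ≤ ‖x - y‖) (hy : ‖y‖ - R ≤ ‖x - y‖) :
    1 ≤ ‖sproj R x - sproj R y‖ := by
  rcases le_total ‖y‖ ‖x‖ with h | h
  · exact sproj_sep_aux hR h hxy hx
  · rw [norm_sub_rev]
    rw [norm_sub_rev] at hxy hy
    exact sproj_sep_aux hR h hxy hy

set_option linter.unusedSectionVars false

lemma pack_aux {θ : ℕ}
    (hθ : ∀ S : Finset N, (∀ x ∈ S, ‖x‖ ≤ 2) → (0 : N) ∈ S →
      (∀ x ∈ S, ∀ y ∈ S, x ≠ y → 1 ≤ ‖x - y‖) → S.card ≤ θ)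
    (A : Finset N) (h1 : ∀ x ∈ A, 1 ≤ ‖x‖) (h2 : ∀ x ∈ A, ‖x‖ ≤ 2)
    (hsep : ∀ x ∈ A, ∀ y ∈ A, x ≠ y → 1 ≤ ‖x - y‖) :
    A.card + 1 ≤ θ := by
  classical
  have h0 : (0 : N) ∉ A := by
    intro h
    have := h1 0 h
    rw [norm_zero] at this
    linarith
  have hcard := hθ (insert 0 A) ?_ (mem_insert_self _ _) ?_
  · rw [card_insert_of_notMem h0] at hcard
    omega
  · intro x hx
    rcases mem_insert.1 hx with rfl | hx
    · simp
    · exact h2 x hx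
  · intro x hx y hy hxy
    rcases mem_insert.1 hx with rfl | hx <;> rcases mem_insert.1 hy with rfl | hy
    · exact absurd rfl hxy
    · rw [zero_sub, norm_neg]; exact h1 y hy
    · rw [sub_zero]; exact h1 x hx
    · exact hsep x hx y hy hxy

lemma base_lemma {θ k : ℕ} (hk : 1 ≤ k)
    (hθ : ∀ S : Finset N, (∀ x ∈ S, ‖x‖ ≤ 2) → (0 : N) ∈ S →
      (∀ x ∈ S, ∀ y ∈ S, x ≠ y → 1 ≤ ‖x - y‖) → S.card ≤ θ)
    {m : ℕ} (c : Fin m → N) (r : Fin m → ℝ) (i : Fin m) (hR : 0 < r i)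
    (E P : Finset (Fin m))
    (hokE : ∀ x ∈ E, x ≠ i ∧ r i ≤ ‖c x - c i‖ ∧ ‖c x - c i‖ ≤ 2 * r i)
    (hgoodP : ∀ x ∈ P, x ≠ i ∧ r i ≤ r x ∧ r i ≤ ‖c x - c i‖ ∧ ‖c x - c i‖ ≤ r i + r x)
    (hE1 : E.card ≤ 1) (hEP : Disjoint E P)
    (hI1 : ∀ x ∈ E, ∀ p ∈ P, r p ≤ ‖c p - c x‖)
    (hI3 : ∀ p ∈ P, ∀ q ∈ P, p ≠ q →
      r i ≤ ‖c p - c q‖ ∧ ‖c p - c i‖ - r i ≤ ‖c p - c q‖ ∧ ‖c q - c i‖ - r i ≤ ‖c p - c q‖) :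
    E.card + k * P.card + k ≤ k * θ := by
  classical
  set ψ : Fin m → N := fun x => sproj (r i) (c x - c i) with hψ
  have hsub : ∀ x y : Fin m, (c x - c i) - (c y - c i) = c x - c y := by
    intro x y; abel
  have hnormge : ∀ x ∈ P ∪ E, 1 ≤ ‖ψ x‖ := by
    intro x hx
    rcases mem_union.1 hx with hx | hx
    · exact sproj_norm_ge hR (hgoodP x hx).2.2.1
    · exact sproj_norm_ge hR (hokE x hx).2.1
  have hnormle : ∀ x ∈ P ∪ E, ‖ψ x‖ ≤ 2 := fun x _ => sproj_norm_le hR _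
  have hsepPE : ∀ p ∈ P, ∀ x ∈ E, 1 ≤ ‖ψ p - ψ x‖ := by
    intro p hp x hx
    obtain ⟨_, hrp, hdp, hdp2⟩ := hgoodP p hp
    obtain ⟨_, hdx, hdx2⟩ := hokE x hx
    have hD := hI1 x hx p hp
    refine sproj_sep hR ?_ ?_ ?_ <;> rw [hsub] <;> linarith
  have hsepPP : ∀ p ∈ P, ∀ q ∈ P, p ≠ q → 1 ≤ ‖ψ p - ψ q‖ := by
    intro p hp q hq hpq
    obtain ⟨h1, h2, h3⟩ := hI3 p hp q hq hpq
    refine sproj_sep hR ?_ ?_ ?_ <;> rw [hsub] <;> linarith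
  have hsep : ∀ x ∈ P ∪ E, ∀ y ∈ P ∪ E, x ≠ y → 1 ≤ ‖ψ x - ψ y‖ := by
    intro x hx y hy hxy
    rcases mem_union.1 hx with hx' | hx' <;> rcases mem_union.1 hy with hy' | hy'
    · exact hsepPP x hx' y hy' hxy
    · exact hsepPE x hx' y hy'
    · rw [norm_sub_rev]; exact hsepPE y hy' x hx'
    · exact absurd (Finset.one_lt_card.2 ⟨x, hx', y, hy', hxy⟩) (by omega)
  have hinj : Set.InjOn ψ (↑(P ∪ E) : Set (Fin m)) := by
    intro a ha b hb hab
    by_contra hne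
    have h := hsep a (Finset.mem_coe.1 ha) b (Finset.mem_coe.1 hb) hne
    rw [hab, sub_self, norm_zero] at h
    linarith
  have hcardA : ((P ∪ E).image ψ).card = P.card + E.card := by
    rw [Finset.card_image_of_injOn hinj, card_union_of_disjoint hEP.symm]
  have hpack : ((P ∪ E).image ψ).card + 1 ≤ θ := by
    apply pack_aux hθ
    · intro x hx
      obtain ⟨a, ha, rfl⟩ := mem_image.1 hx
      exact hnormge a ha
    · intro x hx
      obtain ⟨a, ha, rfl⟩ := mem_image.1 hx
      exact hnormle a ha
    · intro x hx y hy hxy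
      obtain ⟨a, ha, rfl⟩ := mem_image.1 hx
      obtain ⟨b, hb, rfl⟩ := mem_image.1 hy
      exact hsep a ha b hb (fun h => hxy (by rw [h]))
  rw [hcardA] at hpack
  have h9 : k * (P.card + E.card + 1) ≤ k * θ := Nat.mul_le_mul_left k (by omega)
  have h10 : E.card ≤ k * E.card := Nat.le_mul_of_pos_left _ hk
  have hexp : k * (P.card + E.card + 1) = k * P.card + k * E.card + k := by ring
  linarith

lemma key_lemma {θ k : ℕ} (hk : 1 ≤ k)
    (hθ : ∀ S : Finset N, (∀ x ∈ S, ‖x‖ ≤ 2) → (0 : N) ∈ S →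
      (∀ x ∈ S, ∀ y ∈ S, x ≠ y → 1 ≤ ‖x - y‖) → S.card ≤ θ)
    {m : ℕ} (c : Fin m → N) (r : Fin m → ℝ) (i : Fin m) (hR : 0 < r i)
    (hopen : ∀ j : Fin m, (univ.filter (fun l => l ≠ j ∧ ‖c j - c l‖ < r j)).card < k) :
    ∀ n : ℕ, ∀ F E P : Finset (Fin m),
      F.card ≤ n →
      (∀ x ∈ F, x ≠ i ∧ r i ≤ r x ∧ r i ≤ ‖c x - c i‖ ∧ ‖c x - c i‖ ≤ r i + r x) →
      (∀ x ∈ E, x ≠ i ∧ r i ≤ ‖c x - c i‖ ∧ ‖c x - c i‖ ≤ 2 * r i) →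
      (∀ x ∈ P, x ≠ i ∧ r i ≤ r x ∧ r i ≤ ‖c x - c i‖ ∧ ‖c x - c i‖ ≤ r i + r x) →
      E.card ≤ 1 →
      Disjoint F E → Disjoint F P → Disjoint E P →
      (∀ x ∈ F ∪ E, ∀ p ∈ P, r p ≤ ‖c p - c x‖) →
      (∀ x ∈ F, ∀ p ∈ P, ‖c x - c i‖ ≤ ‖c p - c i‖) →
      (∀ p ∈ P, ∀ q ∈ P, p ≠ q →
        r i ≤ ‖c p - c q‖ ∧ ‖c p - c i‖ - r i ≤ ‖c p - c q‖ ∧ ‖c q - c i‖ - r i ≤ ‖c p - c q‖) →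
      F.card + E.card + k * P.card + k ≤ k * θ := by
  classical
  intro n
  induction n with
  | zero =>
    intro F E P hFn hgoodF hokE hgoodP hE1 hFE hFP hEP hI1 hI2 hI3
    have hF : F = ∅ := card_eq_zero.1 (Nat.le_zero.1 hFn)
    subst hF
    simpa using base_lemma hk hθ c r i hR E P hokE hgoodP hE1 hEP
      (fun x hx => hI1 x (mem_union_right _ hx)) hI3
  | succ n ih =>
    intro F E P hFn hgoodF hokE hgoodP hE1 hFE hFP hEP hI1 hI2 hI3
    rcases F.eq_empty_or_nonempty with rfl | hFne
    · simpa using base_lemma hk hθ c r i hR E P hokE hgoodP hE1 hEP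
        (fun x hx => hI1 x (mem_union_right _ hx)) hI3
    · obtain ⟨j₀, hj₀F, hj₀max⟩ := F.exists_max_image (fun x => ‖c x - c i‖) hFne
      have hrj₀ : 0 < r j₀ := lt_of_lt_of_le hR (hgoodF j₀ hj₀F).2.1
      set Gset := (F ∪ E).filter (fun x => ‖c j₀ - c x‖ < r j₀) with hGdef
      have hj₀G : j₀ ∈ Gset := by
        rw [hGdef, mem_filter]
        refine ⟨mem_union_left _ hj₀F, ?_⟩
        simp only [sub_self, norm_zero]
        exact hrj₀
      have hGcard : Gset.card ≤ k := by
        have hsubset : Gset ⊆ insert j₀ (univ.filter (fun l => l ≠ j₀ ∧ ‖c j₀ - c l‖ < r j₀)) := by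
          intro x hx
          rw [hGdef, mem_filter] at hx
          by_cases hxj : x = j₀
          · simp [hxj]
          · exact mem_insert_of_mem (mem_filter.2 ⟨mem_univ _, hxj, hx.2⟩)
        calc Gset.card ≤ _ := card_le_card hsubset
          _ ≤ (univ.filter (fun l => l ≠ j₀ ∧ ‖c j₀ - c l‖ < r j₀)).card + 1 :=
              card_insert_le _ _
          _ ≤ k := by have := hopen j₀; omega
      set F' := F \ Gset with hF'def
      set E' := E \ Gset with hE'def
      have hj₀P : j₀ ∉ P := disjoint_left.1 hFP hj₀F
      have hFsub : F' ⊆ F := sdiff_subset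
      have hEsub : E' ⊆ E := sdiff_subset
      have hF'n : F'.card ≤ n := by
        have hss : F' ⊆ F.erase j₀ := by
          intro x hx
          rw [hF'def, mem_sdiff] at hx
          exact mem_erase.2 ⟨fun h => hx.2 (h ▸ hj₀G), hx.1⟩
        have := card_le_card hss
        rw [card_erase_of_mem hj₀F] at this
        omega
      have hnotG : ∀ x, x ∈ F' ∪ E' → r j₀ ≤ ‖c j₀ - c x‖ := by
        intro x hx
        have hxFE : x ∈ F ∪ E := by
          rcases mem_union.1 hx with h | h
          · exact mem_union_left _ (hFsub h)
          · exact mem_union_right _ (hEsub h)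
        have hxG : x ∉ Gset := by
          rcases mem_union.1 hx with h | h
          · exact (mem_sdiff.1 h).2
          · exact (mem_sdiff.1 h).2
        rw [hGdef, mem_filter] at hxG
        push_neg at hxG
        exact hxG hxFE
      have hnew : ∀ q ∈ P, r i ≤ ‖c j₀ - c q‖ ∧ ‖c j₀ - c i‖ - r i ≤ ‖c j₀ - c q‖ ∧
          ‖c q - c i‖ - r i ≤ ‖c j₀ - c q‖ := by
        intro q hq
        have hD : r q ≤ ‖c q - c j₀‖ := hI1 j₀ (mem_union_left _ hj₀F) q hq
        have hD' : r q ≤ ‖c j₀ - c q‖ := by rwa [norm_sub_rev] at hD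
        obtain ⟨_, hrq, hdq, hdq2⟩ := hgoodP q hq
        have hord : ‖c j₀ - c i‖ ≤ ‖c q - c i‖ := hI2 j₀ hj₀F q hq
        exact ⟨le_trans hrq hD', by linarith, by linarith⟩
      have hIH := ih F' E' (insert j₀ P) hF'n
        (fun x hx => hgoodF x (hFsub hx))
        (fun x hx => hokE x (hEsub hx))
        (fun x hx => by
          rcases mem_insert.1 hx with rfl | hx
          · exact hgoodF x hj₀F
          · exact hgoodP x hx)
        (le_trans (card_le_card hEsub) hE1)
        (hFE.mono hFsub hEsub)
        (by
          rw [disjoint_left]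
          intro x hx hmem
          rcases mem_insert.1 hmem with rfl | hP
          · exact (mem_sdiff.1 hx).2 hj₀G
          · exact disjoint_left.1 hFP (hFsub hx) hP)
        (by
          rw [disjoint_left]
          intro x hx hmem
          rcases mem_insert.1 hmem with rfl | hP
          · exact (mem_sdiff.1 hx).2 hj₀G
          · exact disjoint_left.1 hEP (hEsub hx) hP)
        (by
          intro x hx p hp
          rcases mem_insert.1 hp with rfl | hp
          · exact hnotG x hx
          · refine hI1 x ?_ p hp
            rcases mem_union.1 hx with h | h
            · exact mem_union_left _ (hFsub h)
            · exact mem_union_right _ (hEsub h))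
        (by
          intro x hx p hp
          rcases mem_insert.1 hp with rfl | hp
          · exact hj₀max x (hFsub hx)
          · exact hI2 x (hFsub hx) p hp)
        (by
          intro p hp q hq hpq
          rcases mem_insert.1 hp with h1 | h1 <;> rcases mem_insert.1 hq with h2 | h2
          · exact absurd (h1.trans h2.symm) hpq
          · subst h1; exact hnew q h2
          · subst h2
            obtain ⟨a1, a2, a3⟩ := hnew p h1
            rw [norm_sub_rev _ (c p)] at a1 a2 a3
            exact ⟨a1, a3, a2⟩
          · exact hI3 p h1 q h2 hpq)
      rw [card_insert_of_notMem hj₀P] at hIH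
      -- cardinal bookkeeping
      have hGsub : Gset ⊆ F ∪ E := filter_subset _ _
      have hFsplit : (F ∩ Gset).card + (F \ Gset).card = F.card := by
        rw [card_inter_add_card_sdiff]
      have hEsplit : (E ∩ Gset).card + (E \ Gset).card = E.card := by
        rw [card_inter_add_card_sdiff]
      have hunion : (F ∩ Gset) ∪ (E ∩ Gset) = Gset := by
        rw [← union_inter_distrib_right]
        exact inter_eq_right.2 hGsub
      have hdisj : Disjoint (F ∩ Gset) (E ∩ Gset) :=
        hFE.mono inter_subset_left inter_subset_left
      have hGsplit : (F ∩ Gset).card + (E ∩ Gset).card = Gset.card := by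
        rw [← card_union_of_disjoint hdisj, hunion]
      have hmul : k * (P.card + 1) = k * P.card + k := by ring
      have hF'c : F'.card = (F \ Gset).card := by rw [hF'def]
      have hE'c : E'.card = (E \ Gset).card := by rw [hE'def]
      linarith [hIH, hGcard]


lemma degb {θ k : ℕ} (hk : 1 ≤ k)
    (hθ : ∀ S : Finset N, (∀ x ∈ S, ‖x‖ ≤ 2) → (0 : N) ∈ S →
      (∀ x ∈ S, ∀ y ∈ S, x ≠ y → 1 ≤ ‖x - y‖) → S.card ≤ θ)
    {m : ℕ} (c : Fin m → N) (r : Fin m → ℝ) (G : SimpleGraph (Fin m))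
    [DecidableRel G.Adj]
    (hrpos : ∀ j, 0 < r j)
    (hopen : ∀ j : Fin m, (univ.filter (fun l => l ≠ j ∧ ‖c j - c l‖ < r j)).card < k)
    (hdist : ∀ a b : Fin m, G.Adj a b → ‖c b - c a‖ ≤ r a + r b)
    (i : Fin m) (Ex : Finset (Fin m)) (hEx1 : Ex.card ≤ 1)
    (hExadj : ∀ e ∈ Ex, G.Adj i e ∧ r e ≤ r i)
    (hmin : ∀ j, G.Adj i j → j ∉ Ex → r i ≤ r j) :
    (univ.filter (fun j => G.Adj i j) : Finset (Fin m)).card < k * θ := by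
  classical
  set Nbr := (univ.filter (fun j => G.Adj i j) : Finset (Fin m)) with hN
  have hNbrAdj : ∀ j ∈ Nbr, G.Adj i j := by
    intro j hj
    exact (mem_filter.1 hj).2
  set G0 := Nbr.filter (fun j => ‖c j - c i‖ < r i) with hG0
  set F₀ := (Nbr \ G0) \ Ex with hF0
  set E₀ := (Nbr ∩ Ex) \ G0 with hE0
  have hcover : Nbr ⊆ G0 ∪ (F₀ ∪ E₀) := by
    intro x hx
    by_cases h1 : x ∈ G0
    · exact mem_union_left _ h1
    · by_cases h2 : x ∈ Ex
      · exact mem_union_right _ (mem_union_right _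
          (mem_sdiff.2 ⟨mem_inter.2 ⟨hx, h2⟩, h1⟩))
      · exact mem_union_right _ (mem_union_left _
          (mem_sdiff.2 ⟨mem_sdiff.2 ⟨hx, h1⟩, h2⟩))
  have hG0card : G0.card < k := by
    refine lt_of_le_of_lt (card_le_card ?_) (hopen i)
    intro x hx
    rw [hG0, mem_filter] at hx
    obtain ⟨hxN, hxd⟩ := hx
    have hadj := hNbrAdj x hxN
    refine mem_filter.2 ⟨mem_univ _, hadj.ne', ?_⟩
    rwa [norm_sub_rev]
  have hgoodF : ∀ x ∈ F₀, x ≠ i ∧ r i ≤ r x ∧ r i ≤ ‖c x - c i‖ ∧ ‖c x - c i‖ ≤ r i + r x := by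
    intro x hx
    rw [hF0, mem_sdiff, mem_sdiff] at hx
    obtain ⟨⟨hxN, hxG0⟩, hxEx⟩ := hx
    have hadj := hNbrAdj x hxN
    have hd : r i ≤ ‖c x - c i‖ := by
      by_contra hcon
      push_neg at hcon
      exact hxG0 (mem_filter.2 ⟨hxN, hcon⟩)
    exact ⟨hadj.ne', hmin x hadj hxEx, hd, hdist i x hadj⟩
  have hokE : ∀ x ∈ E₀, x ≠ i ∧ r i ≤ ‖c x - c i‖ ∧ ‖c x - c i‖ ≤ 2 * r i := by
    intro x hx
    rw [hE0, mem_sdiff, mem_inter] at hx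
    obtain ⟨⟨hxN, hxEx⟩, hxG0⟩ := hx
    have hadj := hNbrAdj x hxN
    have hd : r i ≤ ‖c x - c i‖ := by
      by_contra hcon
      push_neg at hcon
      exact hxG0 (mem_filter.2 ⟨hxN, hcon⟩)
    have hre := (hExadj x hxEx).2
    have := hdist i x hadj
    exact ⟨hadj.ne', hd, by linarith⟩
  have hdisjFE : Disjoint F₀ E₀ := by
    rw [disjoint_left]
    intro x hx hx'
    rw [hF0, mem_sdiff] at hx
    rw [hE0, mem_sdiff, mem_inter] at hx'
    exact hx.2 hx'.1.2
  have hkey := key_lemma hk hθ c r i (hrpos i) hopen F₀.card F₀ E₀ ∅ le_rfl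
    hgoodF hokE (by simp)
    (le_trans (card_le_card (by
      intro x hx
      rw [hE0, mem_sdiff, mem_inter] at hx
      exact hx.1.2)) hEx1)
    hdisjFE (disjoint_empty_right _) (disjoint_empty_right _)
    (by intro x _ p hp; exact absurd hp (notMem_empty p))
    (by intro x _ p hp; exact absurd hp (notMem_empty p))
    (by intro p hp; exact absurd hp (notMem_empty p))
  rw [card_empty, Nat.mul_zero] at hkey
  have hNcard : Nbr.card ≤ G0.card + (F₀.card + E₀.card) :=
    le_trans (card_le_card hcover) (le_trans (card_union_le _ _)
      (by have := card_union_le F₀ E₀; omega))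
  omega


end Aux

/-- Every `k`-th closed sphere-of-influence graph on at least two points has at
least two vertices of degree less than `ϑ(N)·k`. -/
theorem kth_soig_two_small_degrees {N : Type*} [NormedAddCommGroup N] [NormedSpace ℝ N]
    [FiniteDimensional ℝ N] (d : ℕ) (hdim : Module.finrank ℝ N = d)
    (k : ℕ) (hk : 1 ≤ k)
    (θ : ℕ)
    (hθ : ∀ S : Finset N, (∀ x ∈ S, ‖x‖ ≤ 2) → (0 : N) ∈ S →
      (∀ x ∈ S, ∀ y ∈ S, x ≠ y → 1 ≤ ‖x - y‖) → S.card ≤ θ)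
    (m : ℕ) (hm2 : 2 ≤ m) (hmk : k + 1 ≤ m)
    (c : Fin m → N) (hc : Function.Injective c)
    (r : Fin m → ℝ)
    (hr : ∀ i : Fin m,
      IsLeast {ρ : ℝ | 0 ≤ ρ ∧ k ≤ {j : Fin m | j ≠ i ∧ ‖c i - c j‖ ≤ ρ}.ncard} (r i))
    (G : SimpleGraph (Fin m))
    (hG : ∀ i j : Fin m, G.Adj i j ↔
      i ≠ j ∧ (Metric.closedBall (c i) (r i) ∩ Metric.closedBall (c j) (r j)).Nonempty) :
    ∃ i j : Fin m, i ≠ j ∧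
      (G.neighborSet i).ncard < θ * k ∧ (G.neighborSet j).ncard < θ * k := by
  classical
  -- radii are positive
  have hrpos : ∀ j, 0 < r j := by
    intro j
    obtain ⟨⟨hr0, hrk⟩, _⟩ := hr j
    rcases lt_or_eq_of_le hr0 with h | h
    · exact h
    · exfalso
      have hempty : {l : Fin m | l ≠ j ∧ ‖c j - c l‖ ≤ r j} = ∅ := by
        ext l
        simp only [Set.mem_setOf_eq, Set.mem_empty_iff_false, iff_false, not_and]
        intro hlj hle
        rw [← h] at hle
        have h0 : ‖c j - c l‖ = 0 := le_antisymm hle (norm_nonneg _)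
        exact hlj (hc (sub_eq_zero.1 (norm_eq_zero.1 h0))).symm
      rw [hempty] at hrk
      simp at hrk
      omega
  -- strictly fewer than k points in the open influence ball
  have hopen : ∀ j : Fin m, (univ.filter (fun l => l ≠ j ∧ ‖c j - c l‖ < r j)).card < k := by
    intro j
    by_contra hcon
    push_neg at hcon
    set St := univ.filter (fun l => l ≠ j ∧ ‖c j - c l‖ < r j) with hSt
    have hne : St.Nonempty := card_pos.1 (by omega)
    set ρ := St.sup' hne (fun l => ‖c j - c l‖) with hρ
    have hρlt : ρ < r j := (Finset.sup'_lt_iff hne).2 (fun l hl => (mem_filter.1 hl).2.2)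
    have hρ0 : 0 ≤ ρ := by
      obtain ⟨l, hl⟩ := hne
      exact le_trans (norm_nonneg _) (Finset.le_sup' (fun l => ‖c j - c l‖) hl)
    have hsubs : St ⊆ univ.filter (fun l => l ≠ j ∧ ‖c j - c l‖ ≤ ρ) := by
      intro l hl
      have h := mem_filter.1 hl
      exact mem_filter.2 ⟨mem_univ _, h.2.1, Finset.le_sup' (fun l => ‖c j - c l‖) hl⟩
    have hncard : {l : Fin m | l ≠ j ∧ ‖c j - c l‖ ≤ ρ}.ncard
        = (univ.filter (fun l => l ≠ j ∧ ‖c j - c l‖ ≤ ρ)).card := by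
      rw [← Set.ncard_coe_finset]
      congr 1
      ext x
      simp
    have hmem : r j ≤ ρ := by
      refine (hr j).2 ⟨hρ0, ?_⟩
      rw [hncard]
      exact le_trans hcon (card_le_card hsubs)
    linarith
  -- distance bound between adjacent centers
  have hdist : ∀ a b : Fin m, G.Adj a b → ‖c b - c a‖ ≤ r a + r b := by
    intro a b hab
    obtain ⟨-, z, hz⟩ := (hG a b).1 hab
    obtain ⟨hz1, hz2⟩ := hz
    rw [Metric.mem_closedBall] at hz1 hz2
    calc ‖c b - c a‖ = dist (c b) (c a) := (dist_eq_norm _ _).symm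
      _ ≤ dist (c b) z + dist z (c a) := dist_triangle _ _ _
      _ ≤ r b + r a := add_le_add (by rw [dist_comm]; exact hz2) hz1
      _ = r a + r b := add_comm _ _
  -- neighbor set cardinality as a Finset card
  have hncardN : ∀ i : Fin m, (G.neighborSet i).ncard
      = (univ.filter (fun j => G.Adj i j)).card := by
    intro i
    rw [← Set.ncard_coe_finset]
    congr 1
    ext x
    simp [SimpleGraph.mem_neighborSet]
  -- choose the two vertices of smallest influence radius
  have hmne : (univ : Finset (Fin m)).Nonempty := ⟨⟨0, by omega⟩, mem_univ _⟩
  obtain ⟨i₀, -, hi₀⟩ := Finset.exists_min_image univ r hmne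
  have herase : (univ.erase i₀).Nonempty := by
    rw [← card_pos, card_erase_of_mem (mem_univ _), card_univ, Fintype.card_fin]
    omega
  obtain ⟨i₁, hi₁mem, hi₁⟩ := Finset.exists_min_image (univ.erase i₀) r herase
  have hne01 : i₁ ≠ i₀ := (mem_erase.1 hi₁mem).1
  refine ⟨i₀, i₁, hne01.symm, ?_, ?_⟩
  · rw [hncardN, mul_comm θ k]
    exact degb hk hθ c r G hrpos hopen hdist i₀ ∅ (by simp) (by simp)
      (fun j _ _ => hi₀ j (mem_univ _))
  · rw [hncardN, mul_comm θ k]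
    by_cases hadj : G.Adj i₁ i₀
    · refine degb hk hθ c r G hrpos hopen hdist i₁ {i₀} (by simp) ?_ ?_
      · intro e he
        rw [mem_singleton] at he
        subst he
        exact ⟨hadj, hi₀ i₁ (mem_univ _)⟩
      · intro j hj hjEx
        rw [mem_singleton] at hjEx
        exact hi₁ j (mem_erase.2 ⟨hjEx, mem_univ _⟩)
    · refine degb hk hθ c r G hrpos hopen hdist i₁ ∅ (by simp) (by simp) ?_
      intro j hj _hEx
      have hj0 : j ≠ i₀ := by
        rintro rfl
        exact hadj hj
      exact hi₁ j (mem_erase.2 ⟨hj0, mem_univ _⟩)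
end

section
/- Let N be a d-dimensional real normed space, let k ∈ ℕ with k ≥ 1, and let c₁, …, c_m be distinct points of N with m ≥ 2 (and m ≥ k + 1 so that the radii are defined). For each i let r_i be the smallest r ≥ 0 such that {j : j ≠ i, ‖c_i − c_j‖ ≤ r} has at least k elements, and let G be the graph on {1, …, m} joining i and j whenever the closed balls B(c_i, r_i) and B(c_j, r_j) intersect. Then there exist at least two distinct vertices of G whose degree is less than 5^d · k. -/
open Metric Set MeasureTheory
open scoped ENNReal

section SOIG

variable {N : Type*} [NormedAddCommGroup N] [NormedSpace ℝ N]

/-- Radial truncation of `p` to the closed ball of radius `2R` around `v`. -/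
noncomputable def soigProj (v : N) (R : ℝ) (p : N) : N :=
  if ‖p - v‖ ≤ 2 * R then p else v + (2 * R / ‖p - v‖) • (p - v)

lemma soigProj_norm_le (v : N) {R : ℝ} (hR : 0 < R) (p : N) :
    ‖soigProj v R p - v‖ ≤ 2 * R := by
  rw [soigProj]
  split_ifs with h
  · exact h
  · push_neg at h
    have h0 : (0 : ℝ) < ‖p - v‖ := lt_trans (by linarith) h
    rw [add_sub_cancel_left, norm_smul, Real.norm_eq_abs,
      abs_of_pos (by positivity), div_mul_cancel₀ _ h0.ne']

lemma soigProj_FL (v p q : N) {R rp rq : ℝ} (hR : 0 < R)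
    (hba : ‖q - v‖ ≤ ‖p - v‖) (hp : ‖p - v‖ ≤ R + rp)
    (hmax : R ≤ max rp rq)
    (hy : ‖soigProj v R p - soigProj v R q‖ < R) :
    ‖p - q‖ < max rp rq := by
  by_cases h1 : ‖p - v‖ ≤ 2 * R
  · rw [soigProj, if_pos h1, soigProj, if_pos (hba.trans h1)] at hy
    exact hy.trans_le hmax
  · push_neg at h1
    have ha : (0 : ℝ) < ‖p - v‖ := by linarith
    suffices hs : ‖p - q‖ < ‖p - v‖ - R by
      have h2 : ‖p - v‖ - R ≤ rp := by linarith
      exact lt_of_lt_of_le hs (h2.trans (le_max_left _ _))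
    rw [soigProj, if_neg (not_le.2 h1)] at hy
    by_cases h2 : ‖q - v‖ ≤ 2 * R
    · rw [soigProj, if_pos h2] at hy
      set yp := v + (2 * R / ‖p - v‖) • (p - v) with hypdef
      have hcoef : (0 : ℝ) ≤ 1 - 2 * R / ‖p - v‖ := by
        have : 2 * R / ‖p - v‖ < 1 := (div_lt_one ha).2 h1
        linarith
      have hpyp : ‖p - yp‖ = ‖p - v‖ - 2 * R := by
        have he : p - yp = (1 - 2 * R / ‖p - v‖) • (p - v) := by
          rw [hypdef]; module
        rw [he, norm_smul, Real.norm_eq_abs, abs_of_nonneg hcoef, sub_mul, one_mul,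
          div_mul_cancel₀ _ ha.ne']
      have tri : ‖p - q‖ ≤ ‖p - yp‖ + ‖yp - q‖ := by
        have := dist_triangle p yp q
        simpa [dist_eq_norm] using this
      linarith
    · push_neg at h2
      have hb : (0 : ℝ) < ‖q - v‖ := by linarith
      rw [soigProj, if_neg (not_le.2 h2)] at hy
      set A := (2 * R / ‖p - v‖) • (p - v) with hA
      set B := (2 * R / ‖q - v‖) • (q - v) with hB
      have hAB : ‖A - B‖ < R := by
        have : v + A - (v + B) = A - B := by abel
        rwa [this] at hy
      have hnA : ‖A‖ = 2 * R := by
        rw [hA, norm_smul, Real.norm_eq_abs, abs_of_pos (by positivity),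
          div_mul_cancel₀ _ ha.ne']
      have h1p : p - v = (‖p - v‖ / (2 * R)) • A := by
        rw [hA, smul_smul]
        have : ‖p - v‖ / (2 * R) * (2 * R / ‖p - v‖) = 1 := by
          field_simp
        rw [this, one_smul]
      have h1q : q - v = (‖q - v‖ / (2 * R)) • B := by
        rw [hB, smul_smul]
        have : ‖q - v‖ / (2 * R) * (2 * R / ‖q - v‖) = 1 := by
          field_simp
        rw [this, one_smul]
      have hid : p - q
          = (‖q - v‖ / (2 * R)) • (A - B) + ((‖p - v‖ - ‖q - v‖) / (2 * R)) • A := by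
        have hstep : (‖q - v‖ / (2 * R)) • (A - B) + ((‖p - v‖ - ‖q - v‖) / (2 * R)) • A
            = (‖p - v‖ / (2 * R)) • A - (‖q - v‖ / (2 * R)) • B := by module
        rw [hstep, ← h1p, ← h1q]; abel
      have est : ‖p - q‖ ≤ (‖q - v‖ / (2 * R)) * ‖A - B‖
          + ((‖p - v‖ - ‖q - v‖) / (2 * R)) * ‖A‖ := by
        rw [hid]
        refine (norm_add_le _ _).trans ?_
        rw [norm_smul, norm_smul, Real.norm_eq_abs, Real.norm_eq_abs,
          abs_of_nonneg (by positivity),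
          abs_of_nonneg (div_nonneg (by linarith) (by linarith))]
      have c1 : (‖q - v‖ / (2 * R)) * ‖A - B‖ < (‖q - v‖ / (2 * R)) * R :=
        mul_lt_mul_of_pos_left hAB (by positivity)
      have c2 : ((‖p - v‖ - ‖q - v‖) / (2 * R)) * ‖A‖ = ‖p - v‖ - ‖q - v‖ := by
        rw [hnA]; field_simp
      have c3 : (‖q - v‖ / (2 * R)) * R = ‖q - v‖ / 2 := by
        field_simp
      linarith

end SOIG


lemma soig_pack {N : Type*} [NormedAddCommGroup N] [NormedSpace ℝ N]
    [FiniteDimensional ℝ N] {ι : Type*} (k : ℕ) (s : Finset ι) (y : ι → N)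
    (x : N) {R : ℝ} (hR : 0 < R)
    (hy : ∀ j ∈ s, y j ∈ closedBall x (2 * R))
    (hcard : 5 ^ (Module.finrank ℝ N) * k < s.card) :
    ∃ T : Finset ι, T ⊆ s ∧ k + 1 ≤ T.card ∧ ∀ j ∈ T, ∀ l ∈ T, ‖y j - y l‖ < R := by
  classical
  borelize N
  by_contra hcon
  push_neg at hcon
  have hz : ∀ z : N, (s.filter (fun j => dist z (y j) < R / 2)).card ≤ k := by
    intro z
    by_contra hzk
    push_neg at hzk
    obtain ⟨j, hj, l, hl, hnl⟩ := hcon (s.filter (fun j => dist z (y j) < R / 2))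
      (Finset.filter_subset _ _) hzk
    rw [Finset.mem_filter] at hj hl
    have : ‖y j - y l‖ < R := by
      have h := dist_triangle (y j) z (y l)
      rw [dist_comm (y j) z] at h
      calc ‖y j - y l‖ = dist (y j) (y l) := (dist_eq_norm _ _).symm
        _ ≤ dist z (y j) + dist z (y l) := h
        _ < R / 2 + R / 2 := add_lt_add hj.2 hl.2
        _ = R := by ring
    exact absurd this (not_lt.2 hnl)
  set n := Module.finrank ℝ N with hn
  set μ := (Module.finBasis ℝ N).addHaar with hμ
  have hmain : (∑ j ∈ s, μ (ball (y j) (R / 2))) ≤ (k : ℝ≥0∞) * μ (closedBall x (2 * R + R / 2)) := by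
    have heq : ∑ j ∈ s, μ (ball (y j) (R / 2))
        = ∫⁻ z, ∑ j ∈ s, (ball (y j) (R / 2)).indicator (1 : N → ℝ≥0∞) z ∂μ := by
      rw [lintegral_finset_sum _ (fun j _ => measurable_one.indicator measurableSet_ball)]
      exact Finset.sum_congr rfl fun j _ => (lintegral_indicator_one measurableSet_ball).symm
    rw [heq, ← lintegral_indicator_const (measurableSet_closedBall) (k : ℝ≥0∞)]
    apply lintegral_mono
    intro z
    dsimp only
    by_cases hzm : z ∈ closedBall x (2 * R + R / 2)
    · rw [Set.indicator_of_mem hzm]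
      have hsum : ∑ j ∈ s, (ball (y j) (R / 2)).indicator (1 : N → ℝ≥0∞) z
          = ((s.filter (fun j => dist z (y j) < R / 2)).card : ℝ≥0∞) := by
        rw [Finset.card_filter]
        push_cast
        refine Finset.sum_congr rfl fun j _ => ?_
        by_cases hj : dist z (y j) < R / 2
        · rw [if_pos hj, Set.indicator_of_mem (mem_ball.2 hj)]; rfl
        · rw [if_neg hj, Set.indicator_of_notMem (fun h => hj (mem_ball.1 h))]
      rw [hsum]
      exact_mod_cast Nat.cast_le.2 (hz z)
    · have hout : ∀ j ∈ s, (ball (y j) (R / 2)).indicator (1 : N → ℝ≥0∞) z = 0 := by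
        intro j hj
        apply Set.indicator_of_notMem
        intro hmem
        apply hzm
        rw [mem_closedBall]
        calc dist z x ≤ dist z (y j) + dist (y j) x := dist_triangle _ _ _
          _ ≤ R / 2 + 2 * R := add_le_add (le_of_lt (mem_ball.1 hmem))
              (mem_closedBall.1 (hy j hj))
          _ = 2 * R + R / 2 := by ring
      rw [Finset.sum_eq_zero hout]
      exact zero_le
  have hball : ∀ j : ι, μ (ball (y j) (R / 2)) = ENNReal.ofReal ((R / 2) ^ n) * μ (ball 0 1) :=
    fun j => Measure.addHaar_ball_of_pos μ _ (by linarith)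
  have hbig : μ (closedBall x (2 * R + R / 2))
      = ENNReal.ofReal ((2 * R + R / 2) ^ n) * μ (ball 0 1) :=
    Measure.addHaar_closedBall μ _ (by linarith)
  rw [Finset.sum_congr rfl (fun j _ => hball j), Finset.sum_const, hbig] at hmain
  have hμ1pos : 0 < μ (ball (0 : N) 1) := measure_ball_pos μ _ one_pos
  have hμ1top : μ (ball (0 : N) 1) ≠ ⊤ := measure_ball_lt_top.ne
  have hA : ENNReal.ofReal ((R / 2) ^ n) ≠ 0 := by
    simp only [ne_eq, ENNReal.ofReal_eq_zero, not_le]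
    positivity
  have hbigsplit : ENNReal.ofReal ((2 * R + R / 2) ^ n)
      = (5 : ℝ≥0∞) ^ n * ENNReal.ofReal ((R / 2) ^ n) := by
    have h5 : (2 * R + R / 2) ^ n = 5 ^ n * (R / 2) ^ n := by
      rw [← mul_pow]; ring_nf
    rw [h5, ENNReal.ofReal_mul (by positivity), ENNReal.ofReal_pow (by norm_num)]
    norm_num
  rw [hbigsplit] at hmain
  have hmain2 : (s.card : ℝ≥0∞) * (ENNReal.ofReal ((R / 2) ^ n) * μ (ball 0 1))
      ≤ ((k : ℝ≥0∞) * 5 ^ n) * (ENNReal.ofReal ((R / 2) ^ n) * μ (ball 0 1)) := by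
    calc (s.card : ℝ≥0∞) * (ENNReal.ofReal ((R / 2) ^ n) * μ (ball 0 1))
        = s.card • (ENNReal.ofReal ((R / 2) ^ n) * μ (ball 0 1)) := by
          rw [nsmul_eq_mul]
      _ ≤ (k : ℝ≥0∞) * ((5:ℝ≥0∞) ^ n * ENNReal.ofReal ((R / 2) ^ n) * μ (ball 0 1)) := hmain
      _ = ((k : ℝ≥0∞) * 5 ^ n) * (ENNReal.ofReal ((R / 2) ^ n) * μ (ball 0 1)) := by ring
  have hcancel : (s.card : ℝ≥0∞) ≤ (k : ℝ≥0∞) * 5 ^ n := by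
    have hne : ENNReal.ofReal ((R / 2) ^ n) * μ (ball (0:N) 1) ≠ 0 :=
      mul_ne_zero hA hμ1pos.ne'
    have hnt : ENNReal.ofReal ((R / 2) ^ n) * μ (ball (0:N) 1) ≠ ⊤ :=
      ENNReal.mul_ne_top ENNReal.ofReal_ne_top hμ1top
    exact (ENNReal.mul_le_mul_iff_left hne hnt).1 hmain2
  have hfin2 : s.card ≤ k * 5 ^ n := by exact_mod_cast hcancel
  rw [mul_comm k (5 ^ n)] at hfin2
  omega

section Aux

variable {N : Type*} [NormedAddCommGroup N] [NormedSpace ℝ N]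

lemma soig_deg_lt [FiniteDimensional ℝ N]
    (k : ℕ) (hk : 1 ≤ k) (m : ℕ) (c : Fin m → N) (hc : Function.Injective c)
    (r : Fin m → ℝ)
    (hr : ∀ i : Fin m,
      IsLeast {ρ : ℝ | 0 ≤ ρ ∧ k ≤ {j : Fin m | j ≠ i ∧ ‖c i - c j‖ ≤ ρ}.ncard} (r i))
    (G : SimpleGraph (Fin m))
    (hG : ∀ i j : Fin m, G.Adj i j ↔
      i ≠ j ∧ (Metric.closedBall (c i) (r i) ∩ Metric.closedBall (c j) (r j)).Nonempty)
    (v w : Fin m) (hvw : ∀ j, G.Adj v j → j ≠ w → r v ≤ r j) :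
    (G.neighborSet v).ncard < 5 ^ (Module.finrank ℝ N) * k := by
  classical
  by_contra hdeg
  push_neg at hdeg
  -- positivity of the radii
  have hrpos : ∀ i, 0 < r i := by
    intro i
    obtain ⟨h0, hkc⟩ := (hr i).1
    rcases h0.lt_or_eq with h | h
    · exact h
    · exfalso
      have hne : {j : Fin m | j ≠ i ∧ ‖c i - c j‖ ≤ r i}.Nonempty := by
        apply Set.nonempty_of_ncard_ne_zero
        omega
      obtain ⟨j, hji, hj⟩ := hne
      rw [← h] at hj
      have : c i = c j := by
        have := norm_le_zero_iff.1 hj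
        rwa [sub_eq_zero] at this
      exact hji (hc this.symm)
  set R := r v with hRdef
  have hR : 0 < R := hrpos v
  -- adjacency gives distance bound
  have hadj : ∀ j, G.Adj v j → ‖c j - c v‖ ≤ R + r j := by
    intro j hj
    obtain ⟨-, z, hz⟩ := (hG v j).1 hj
    rw [Set.mem_inter_iff, mem_closedBall, mem_closedBall] at hz
    calc ‖c j - c v‖ = dist (c j) (c v) := (dist_eq_norm _ _).symm
      _ ≤ dist (c j) z + dist z (c v) := dist_triangle _ _ _
      _ ≤ r j + R := add_le_add (by rw [dist_comm]; exact hz.2) hz.1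
      _ = R + r j := by ring
  -- the endgame: k points strictly within r a of c a is absurd
  have endgame : ∀ a : Fin m, ∀ T' : Finset (Fin m), a ∉ T' → k ≤ T'.card →
      (∀ j ∈ T', ‖c a - c j‖ < r a) → False := by
    intro a T' haT' hTk hclose
    have hne : T'.Nonempty := Finset.card_pos.1 (lt_of_lt_of_le hk hTk)
    set t := T'.sup' hne (fun j => ‖c a - c j‖) with ht
    have htlt : t < r a := (Finset.sup'_lt_iff hne).2 hclose
    obtain ⟨j0, hj0⟩ := hne
    have ht0 : 0 ≤ t := le_trans (norm_nonneg _) (Finset.le_sup' (fun j => ‖c a - c j‖) hj0)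
    have hsub : (T' : Set (Fin m)) ⊆ {j : Fin m | j ≠ a ∧ ‖c a - c j‖ ≤ t} := by
      intro j hj
      rw [Finset.mem_coe] at hj
      exact ⟨fun h => haT' (h ▸ hj), Finset.le_sup' (fun j => ‖c a - c j‖) hj⟩
    have hk' : k ≤ {j : Fin m | j ≠ a ∧ ‖c a - c j‖ ≤ t}.ncard := by
      calc k ≤ T'.card := hTk
        _ = (T' : Set (Fin m)).ncard := (Set.ncard_coe_finset _).symm
        _ ≤ _ := Set.ncard_le_ncard hsub (Set.toFinite _)
    have := (hr a).2 ⟨ht0, hk'⟩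
    linarith
  -- set up the packing
  have hfin : (G.neighborSet v).Finite := Set.toFinite _
  set F := hfin.toFinset with hF
  have hmemF : ∀ j, j ∈ F ↔ G.Adj v j := by
    intro j; rw [hF, Set.Finite.mem_toFinset, SimpleGraph.mem_neighborSet]
  have hcardF : F.card = (G.neighborSet v).ncard := (Set.ncard_eq_toFinset_card _ hfin).symm
  have hvF : v ∉ F := fun h => G.irrefl ((hmemF v).1 h)
  set s : Finset (Fin m) := insert v F with hs
  set y : Fin m → N := fun j => soigProj (c v) R (c j) with hy
  have hymem : ∀ j ∈ s, y j ∈ closedBall (c v) (2 * R) := by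
    intro j _
    rw [mem_closedBall, dist_eq_norm]
    exact soigProj_norm_le (c v) hR (c j)
  have hcard : 5 ^ (Module.finrank ℝ N) * k < s.card := by
    rw [hs, Finset.card_insert_of_notMem hvF]
    omega
  obtain ⟨T, hTs, hTcard, hTpair⟩ := soig_pack k s y (c v) hR hymem hcard
  by_cases hvT : v ∈ T
  · -- Case A : v is among the selected cluster
    have hyv : y v = c v := by
      rw [hy]
      simp only
      rw [soigProj, if_pos (by simp; positivity)]
    refine endgame v (T.erase v) (Finset.notMem_erase v T) ?_ ?_
    · rw [Finset.card_erase_of_mem hvT]; omega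
    · intro j hj
      have hjT := Finset.mem_of_mem_erase hj
      have hclose := hTpair v hvT j hjT
      rw [hyv] at hclose
      -- show y j = c j
      have hyj : y j = c j := by
        rw [hy]; simp only; rw [soigProj]
        split_ifs with h
        · rfl
        · exfalso
          push_neg at h
          have : ‖c v - (c v + (2 * R / ‖c j - c v‖) • (c j - c v))‖ = 2 * R := by
            have ha : (0 : ℝ) < ‖c j - c v‖ := by linarith
            rw [norm_sub_rev, add_sub_cancel_left, norm_smul, Real.norm_eq_abs,
              abs_of_pos (by positivity), div_mul_cancel₀ _ ha.ne']
          rw [hy] at hclose; simp only at hclose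
          rw [soigProj, if_neg (not_le.2 h)] at hclose
          rw [this] at hclose
          linarith
      rwa [hyj] at hclose
  · -- Case B : all selected points are neighbours of v
    have hTadj : ∀ j ∈ T, G.Adj v j := by
      intro j hj
      have := hTs hj
      rw [hs, Finset.mem_insert] at this
      rcases this with h | h
      · exact absurd (h ▸ hj) hvT
      · exact (hmemF j).1 h
    have hTne : T.Nonempty := Finset.card_pos.1 (by omega)
    obtain ⟨a, haT, hamax⟩ := Finset.exists_max_image T r hTne
    have haR : R ≤ r a := by
      -- T has at least two elements, so one of them differs from w
      obtain ⟨j1, hj1, j2, hj2, hj12⟩ := Finset.one_lt_card.1 (by omega : 1 < T.card)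
      rcases ne_or_eq j1 w with h | h
      · exact le_trans (hvw j1 (hTadj j1 hj1) h) (hamax j1 hj1)
      · have h2 : j2 ≠ w := fun h2 => hj12 (h2 ▸ h ▸ rfl)
        exact le_trans (hvw j2 (hTadj j2 hj2) h2) (hamax j2 hj2)
    refine endgame a (T.erase a) (Finset.notMem_erase a T) ?_ ?_
    · rw [Finset.card_erase_of_mem haT]; omega
    · intro l hl
      have hlT := Finset.mem_of_mem_erase hl
      have hmaxal : max (r a) (r l) = r a := max_eq_left (hamax l hlT)
      rcases le_total ‖c l - c v‖ ‖c a - c v‖ with h | h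
      · have := soigProj_FL (c v) (c a) (c l) hR h (hadj a (hTadj a haT))
          (le_trans haR (by rw [hmaxal])) (hTpair a haT l hlT)
        rwa [hmaxal] at this
      · have := soigProj_FL (c v) (c l) (c a) hR h (hadj l (hTadj l hlT))
          (le_trans haR (by rw [max_comm, hmaxal])) (hTpair l hlT a haT)
        rw [max_comm, hmaxal, norm_sub_rev] at this
        exact this

end Aux


/-- Every `k`-th closed sphere-of-influence graph on at least two points in a
`d`-dimensional normed space has at least two vertices of degree less than
`5 ^ d · k`. -/
theorem kth_soig_two_degrees_lt_five_pow_mul {N : Type*} [NormedAddCommGroup N]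
    [NormedSpace ℝ N] [FiniteDimensional ℝ N] (d : ℕ) (hdim : Module.finrank ℝ N = d)
    (k : ℕ) (hk : 1 ≤ k)
    (m : ℕ) (hm2 : 2 ≤ m) (hmk : k + 1 ≤ m)
    (c : Fin m → N) (hc : Function.Injective c)
    (r : Fin m → ℝ)
    (hr : ∀ i : Fin m,
      IsLeast {ρ : ℝ | 0 ≤ ρ ∧ k ≤ {j : Fin m | j ≠ i ∧ ‖c i - c j‖ ≤ ρ}.ncard} (r i))
    (G : SimpleGraph (Fin m))
    (hG : ∀ i j : Fin m, G.Adj i j ↔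
      i ≠ j ∧ (Metric.closedBall (c i) (r i) ∩ Metric.closedBall (c j) (r j)).Nonempty) :
    ∃ i j : Fin m, i ≠ j ∧
      (G.neighborSet i).ncard < 5 ^ d * k ∧ (G.neighborSet j).ncard < 5 ^ d * k := by
  subst hdim
  have hm0 : 0 < m := by omega
  obtain ⟨v0, -, h0⟩ := Finset.exists_min_image Finset.univ r
    ⟨⟨0, hm0⟩, Finset.mem_univ _⟩
  have hne : (Finset.univ.erase v0).Nonempty := by
    rw [← Finset.card_pos, Finset.card_erase_of_mem (Finset.mem_univ _), Finset.card_univ,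
      Fintype.card_fin]
    omega
  obtain ⟨v1, hv1mem, h1⟩ := Finset.exists_min_image _ r hne
  refine ⟨v0, v1, (Finset.ne_of_mem_erase hv1mem).symm, ?_, ?_⟩
  · exact soig_deg_lt k hk m c hc r hr G hG v0 v0
      (fun j _ _ => h0 j (Finset.mem_univ _))
  · exact soig_deg_lt k hk m c hc r hr G hG v1 v0
      (fun j _ hjw => h1 j (Finset.mem_erase.2 ⟨hjw, Finset.mem_univ _⟩))
end
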